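/- Let λ ⊢ n and μ ⊢ m. Then θ_{λ,μ} = θ_{μ,λ}, where θ_{λ,μ} is the gcd of the coefficients of Y_s Y_{t^{+n}} Y_{s+t} in ℤS_{n+m} for any λ-tableau s and μ-tableau t. -/

import Mathlib

open Finset Equiv MonoidAlgebra

namespace YS

variable {N : ℕ}

/-- The set of entries of a tableau `s` of shape `μ` with values in `Fin N`. -/
def entriesFinset (μ : YoungDiagram) (s : ↥μ.cells → Fin N) : Finset (Fin N) :=
  μ.cells.attach.image s

/-- The entries in row `i` of the tableau `s`. -/
def rowFinset (μ : YoungDiagram) (s : ↥μ.cells → Fin N) (i : ℕ) : Finset (Fin N) :=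
  (μ.cells.attach.filter (fun c => c.val.1 = i)).image s

/-- The entries in column `j` of the tableau `s`. -/
def colFinset (μ : YoungDiagram) (s : ↥μ.cells → Fin N) (j : ℕ) : Finset (Fin N) :=
  (μ.cells.attach.filter (fun c => c.val.2 = j)).image s

/-- The row stabilizer `R_s`: permutations fixing everything outside the entries of `s`
and permuting the entries within each row. -/
def rowStab (μ : YoungDiagram) (s : ↥μ.cells → Fin N) : Finset (Perm (Fin N)) :=
  univ.filter fun σ =>
    (∀ x, x ∉ entriesFinset μ s → σ x = x) ∧
    ∀ i ∈ μ.cells.image Prod.fst, ∀ x ∈ rowFinset μ s i, σ x ∈ rowFinset μ s i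

/-- The column stabilizer `C_s`. -/
def colStab (μ : YoungDiagram) (s : ↥μ.cells → Fin N) : Finset (Perm (Fin N)) :=
  univ.filter fun σ =>
    (∀ x, x ∉ entriesFinset μ s → σ x = x) ∧
    ∀ j ∈ μ.cells.image Prod.snd, ∀ x ∈ colFinset μ s j, σ x ∈ colFinset μ s j

/-- `{S} = ∑_{σ ∈ S} σ` in the integral group algebra. -/
noncomputable def sumElt (S : Finset (Perm (Fin N))) : MonoidAlgebra ℤ (Perm (Fin N)) :=
  ∑ σ ∈ S, MonoidAlgebra.single σ 1

/-- `[S] = ∑_{σ ∈ S} sgn(σ) σ` in the integral group algebra. -/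
noncomputable def altElt (S : Finset (Perm (Fin N))) : MonoidAlgebra ℤ (Perm (Fin N)) :=
  ∑ σ ∈ S, MonoidAlgebra.single σ ((Perm.sign σ : ℤˣ) : ℤ)

/-- The Young symmetrizer `Y_s = {R_s}[C_s]`. -/
noncomputable def youngSym (μ : YoungDiagram) (s : ↥μ.cells → Fin N) :
    MonoidAlgebra ℤ (Perm (Fin N)) :=
  sumElt (rowStab μ s) * altElt (colStab μ s)

/-- The row stabilizer `R_{s+t}` of the combined tableau: row `i` of `s+t` consists of
the entries of row `i` of `s` together with those of row `i` of `t`. -/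
def combRowStab (lam mu : YoungDiagram) (s : ↥lam.cells → Fin N) (t : ↥mu.cells → Fin N) :
    Finset (Perm (Fin N)) :=
  univ.filter fun σ =>
    (∀ x, x ∉ entriesFinset lam s ∪ entriesFinset mu t → σ x = x) ∧
    ∀ i ∈ lam.cells.image Prod.fst ∪ mu.cells.image Prod.fst,
      ∀ x ∈ rowFinset lam s i ∪ rowFinset mu t i, σ x ∈ rowFinset lam s i ∪ rowFinset mu t i

/-- The column stabilizer `C_{s+t} = C_s C_t` of the combined tableau: the columns of `s+t`
are exactly the columns of `s` together with the columns of `t`. -/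
def combColStab (lam mu : YoungDiagram) (s : ↥lam.cells → Fin N) (t : ↥mu.cells → Fin N) :
    Finset (Perm (Fin N)) :=
  univ.filter fun σ =>
    (∀ x, x ∉ entriesFinset lam s ∪ entriesFinset mu t → σ x = x) ∧
    (∀ j ∈ lam.cells.image Prod.snd, ∀ x ∈ colFinset lam s j, σ x ∈ colFinset lam s j) ∧
    (∀ j ∈ mu.cells.image Prod.snd, ∀ x ∈ colFinset mu t j, σ x ∈ colFinset mu t j)

/-- The Young symmetrizer `Y_{s+t}` of the combined tableau `s+t` of shape `λ+μ`. -/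
noncomputable def combYoungSym (lam mu : YoungDiagram) (s : ↥lam.cells → Fin N)
    (t : ↥mu.cells → Fin N) : MonoidAlgebra ℤ (Perm (Fin N)) :=
  sumElt (combRowStab lam mu s t) * altElt (combColStab lam mu s t)

/-- The (nonnegative) gcd of the coefficients of an element of the group algebra. -/
noncomputable def coeffGcd (f : MonoidAlgebra ℤ (Perm (Fin N))) : ℤ :=
  f.coeff.support.gcd f.coeff

end YS

namespace YS

variable {N : ℕ}

lemma mem_image_perm (π : Perm (Fin N)) {A : Finset (Fin N)} {x : Fin N} :
    x ∈ A.image ⇑π ↔ π⁻¹ x ∈ A := by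
  constructor
  · intro h; rw [Finset.mem_image] at h; obtain ⟨a, ha, rfl⟩ := h; simpa using ha
  · intro h; exact Finset.mem_image.2 ⟨π⁻¹ x, h, by simp⟩

lemma entriesFinset_comp (π : Perm (Fin N)) (μ : YoungDiagram) (s : ↥μ.cells → Fin N) :
    entriesFinset μ (⇑π ∘ s) = (entriesFinset μ s).image π := by
  simp [entriesFinset, Finset.image_image]

lemma rowFinset_comp (π : Perm (Fin N)) (μ : YoungDiagram) (s : ↥μ.cells → Fin N) (i : ℕ) :
    rowFinset μ (⇑π ∘ s) i = (rowFinset μ s i).image π := by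
  simp [rowFinset, Finset.image_image]

lemma colFinset_comp (π : Perm (Fin N)) (μ : YoungDiagram) (s : ↥μ.cells → Fin N) (j : ℕ) :
    colFinset μ (⇑π ∘ s) j = (colFinset μ s j).image π := by
  simp [colFinset, Finset.image_image]

lemma fix_iff (π : Perm (Fin N)) (E : Finset (Fin N)) (σ : Perm (Fin N)) :
    (∀ x ∉ E.image ⇑π, σ x = x) ↔ (∀ x ∉ E, (π⁻¹ * σ * π) x = x) := by
  constructor
  · intro h x hx
    have : σ (π x) = π x := h (π x) (by rw [mem_image_perm]; simpa)
    simp [Perm.mul_apply, this]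
  · intro h x hx
    rw [mem_image_perm] at hx
    have := h (π⁻¹ x) hx
    simp only [Perm.mul_apply, Perm.inv_def, Equiv.apply_symm_apply] at this
    exact π⁻¹.injective (by simpa using this)

lemma pres_iff (π : Perm (Fin N)) (A : Finset (Fin N)) (σ : Perm (Fin N)) :
    (∀ x ∈ A.image ⇑π, σ x ∈ A.image ⇑π) ↔ (∀ x ∈ A, (π⁻¹ * σ * π) x ∈ A) := by
  constructor
  · intro h x hx
    have : σ (π x) ∈ A.image ⇑π := h (π x) (Finset.mem_image.2 ⟨x, hx, rfl⟩)
    rw [mem_image_perm] at this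
    simpa [Perm.mul_apply] using this
  · intro h x hx
    rw [mem_image_perm] at hx
    have := h (π⁻¹ x) hx
    rw [mem_image_perm]
    simpa [Perm.mul_apply] using this

end YS

namespace YS

variable {N : ℕ}

lemma mem_image_conj {S : Finset (Perm (Fin N))} {σ π : Perm (Fin N)} :
    σ ∈ S.image (fun τ => π * τ * π⁻¹) ↔ π⁻¹ * σ * π ∈ S := by
  simp only [Finset.mem_image]
  constructor
  · rintro ⟨τ, hτ, rfl⟩; simpa [mul_assoc] using hτ
  · intro h; exact ⟨_, h, by group⟩

lemma rowStab_comp (π : Perm (Fin N)) (μ : YoungDiagram) (s : ↥μ.cells → Fin N) :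
    rowStab μ (⇑π ∘ s) = (rowStab μ s).image (fun τ => π * τ * π⁻¹) := by
  ext σ
  rw [mem_image_conj]
  simp only [rowStab, Finset.mem_filter, Finset.mem_univ, true_and,
    entriesFinset_comp, rowFinset_comp, fix_iff, pres_iff]

lemma colStab_comp (π : Perm (Fin N)) (μ : YoungDiagram) (s : ↥μ.cells → Fin N) :
    colStab μ (⇑π ∘ s) = (colStab μ s).image (fun τ => π * τ * π⁻¹) := by
  ext σ
  rw [mem_image_conj]
  simp only [colStab, Finset.mem_filter, Finset.mem_univ, true_and,
    entriesFinset_comp, colFinset_comp, fix_iff, pres_iff]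

lemma combRowStab_comp (π : Perm (Fin N)) (lam mu : YoungDiagram)
    (s : ↥lam.cells → Fin N) (t : ↥mu.cells → Fin N) :
    combRowStab lam mu (⇑π ∘ s) (⇑π ∘ t) =
      (combRowStab lam mu s t).image (fun τ => π * τ * π⁻¹) := by
  ext σ
  rw [mem_image_conj]
  simp only [combRowStab, Finset.mem_filter, Finset.mem_univ, true_and,
    entriesFinset_comp, rowFinset_comp, ← Finset.image_union, fix_iff, pres_iff]

lemma combColStab_comp (π : Perm (Fin N)) (lam mu : YoungDiagram)
    (s : ↥lam.cells → Fin N) (t : ↥mu.cells → Fin N) :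
    combColStab lam mu (⇑π ∘ s) (⇑π ∘ t) =
      (combColStab lam mu s t).image (fun τ => π * τ * π⁻¹) := by
  ext σ
  rw [mem_image_conj]
  simp only [combColStab, Finset.mem_filter, Finset.mem_univ, true_and,
    entriesFinset_comp, colFinset_comp, ← Finset.image_union, fix_iff, pres_iff]

lemma combRowStab_comm (lam mu : YoungDiagram) (s : ↥lam.cells → Fin N)
    (t : ↥mu.cells → Fin N) : combRowStab lam mu s t = combRowStab mu lam t s := by
  ext σ
  simp only [combRowStab, Finset.mem_filter, Finset.mem_univ, true_and]
  rw [Finset.union_comm (entriesFinset lam s)]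
  constructor
  · rintro ⟨h1, h2⟩
    refine ⟨h1, fun i hi x hx => ?_⟩
    rw [Finset.union_comm] at hi hx ⊢
    exact h2 i hi x hx
  · rintro ⟨h1, h2⟩
    refine ⟨h1, fun i hi x hx => ?_⟩
    rw [Finset.union_comm] at hi hx ⊢
    exact h2 i hi x hx

lemma combColStab_comm (lam mu : YoungDiagram) (s : ↥lam.cells → Fin N)
    (t : ↥mu.cells → Fin N) : combColStab lam mu s t = combColStab mu lam t s := by
  ext σ
  simp only [combColStab, Finset.mem_filter, Finset.mem_univ, true_and]
  rw [Finset.union_comm (entriesFinset lam s)]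
  tauto

end YS

namespace YS

variable {N : ℕ}

lemma conj_injective (π : Perm (Fin N)) :
    Function.Injective (fun τ : Perm (Fin N) => π * τ * π⁻¹) := fun a b h => by
  simpa [mul_assoc] using congrArg (fun x => π⁻¹ * x * π) h

lemma domCongr_sumElt (π : Perm (Fin N)) (S : Finset (Perm (Fin N))) :
    MonoidAlgebra.domCongr ℤ ℤ (MulAut.conj π) (sumElt S) =
      sumElt (S.image (fun τ => π * τ * π⁻¹)) := by
  rw [sumElt, map_sum, sumElt, Finset.sum_image (fun a _ b _ h => conj_injective π h)]
  simp [MulAut.conj_apply]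

lemma domCongr_altElt (π : Perm (Fin N)) (S : Finset (Perm (Fin N))) :
    MonoidAlgebra.domCongr ℤ ℤ (MulAut.conj π) (altElt S) =
      altElt (S.image (fun τ => π * τ * π⁻¹)) := by
  rw [altElt, map_sum, altElt, Finset.sum_image (fun a _ b _ h => conj_injective π h)]
  refine Finset.sum_congr rfl fun σ _ => ?_
  have hsign : Perm.sign (π * σ * π⁻¹) = Perm.sign σ := by
    rw [Perm.sign_mul, Perm.sign_mul, Perm.sign_inv,
      mul_comm (Perm.sign π) (Perm.sign σ), mul_assoc, Int.units_mul_self, mul_one]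
  rw [MonoidAlgebra.domCongr_single, MulAut.conj_apply, hsign]

lemma coeffGcd_domCongr (e : Perm (Fin N) ≃* Perm (Fin N))
    (f : MonoidAlgebra ℤ (Perm (Fin N))) :
    coeffGcd (MonoidAlgebra.domCongr ℤ ℤ e f) = coeffGcd f := by
  unfold coeffGcd
  rw [MonoidAlgebra.domCongr_support, Finset.map_eq_image, Finset.gcd_image]
  exact Finset.gcd_congr rfl fun σ _ => by simp

lemma commute_sums {S T : Finset (Perm (Fin N))} {a b : Perm (Fin N) → ℤ}
    (h : ∀ σ ∈ S, ∀ τ ∈ T, Commute σ τ) :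
    Commute (∑ σ ∈ S, MonoidAlgebra.single σ (a σ))
      (∑ τ ∈ T, MonoidAlgebra.single τ (b τ)) := by
  refine Commute.sum_left _ _ _ fun σ hσ => Commute.sum_right _ _ _ fun τ hτ => ?_
  unfold Commute SemiconjBy
  rw [MonoidAlgebra.single_mul_single, MonoidAlgebra.single_mul_single,
    h σ hσ τ hτ, mul_comm (a σ)]

lemma commute_of_fix {σ τ : Perm (Fin N)} {A B : Finset (Fin N)}
    (hA : ∀ x ∉ A, σ x = x) (hB : ∀ x ∉ B, τ x = x) (hAB : Disjoint A B) :
    Commute σ τ := by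
  refine Perm.Disjoint.commute fun x => ?_
  by_cases hx : x ∈ A
  · exact Or.inr (hB x (Finset.disjoint_left.1 hAB hx))
  · exact Or.inl (hA x hx)

lemma commute_youngSym {lam mu : YoungDiagram} {s : ↥lam.cells → Fin N}
    {t : ↥mu.cells → Fin N}
    (hd : Disjoint (entriesFinset lam s) (entriesFinset mu t)) :
    Commute (youngSym lam s) (youngSym mu t) := by
  have key : ∀ (S T : Finset (Perm (Fin N))),
      (∀ σ ∈ S, ∀ x ∉ entriesFinset lam s, σ x = x) →
      (∀ τ ∈ T, ∀ x ∉ entriesFinset mu t, τ x = x) →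
      ∀ (a b : Perm (Fin N) → ℤ),
      Commute (∑ σ ∈ S, MonoidAlgebra.single σ (a σ))
        (∑ τ ∈ T, MonoidAlgebra.single τ (b τ)) := by
    intro S T hS hT a b
    exact commute_sums fun σ hσ τ hτ => commute_of_fix (hS σ hσ) (hT τ hτ) hd
  have h1 : ∀ σ ∈ rowStab lam s, ∀ x ∉ entriesFinset lam s, σ x = x :=
    fun σ hσ => ((Finset.mem_filter.1 hσ).2).1
  have h2 : ∀ σ ∈ colStab lam s, ∀ x ∉ entriesFinset lam s, σ x = x :=
    fun σ hσ => ((Finset.mem_filter.1 hσ).2).1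
  have h3 : ∀ σ ∈ rowStab mu t, ∀ x ∉ entriesFinset mu t, σ x = x :=
    fun σ hσ => ((Finset.mem_filter.1 hσ).2).1
  have h4 : ∀ σ ∈ colStab mu t, ∀ x ∉ entriesFinset mu t, σ x = x :=
    fun σ hσ => ((Finset.mem_filter.1 hσ).2).1
  unfold youngSym sumElt altElt
  exact ((key _ _ h1 h3 _ _).mul_right (key _ _ h1 h4 _ _)).mul_left
    ((key _ _ h2 h3 _ _).mul_right (key _ _ h2 h4 _ _))

lemma domCongr_youngSym (π : Perm (Fin N)) (μ : YoungDiagram) (s : ↥μ.cells → Fin N) :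
    youngSym μ (⇑π ∘ s) = MonoidAlgebra.domCongr ℤ ℤ (MulAut.conj π) (youngSym μ s) := by
  rw [youngSym, youngSym, map_mul, domCongr_sumElt, domCongr_altElt,
    rowStab_comp, colStab_comp]

lemma domCongr_combYoungSym (π : Perm (Fin N)) (lam mu : YoungDiagram)
    (s : ↥lam.cells → Fin N) (t : ↥mu.cells → Fin N) :
    combYoungSym lam mu (⇑π ∘ s) (⇑π ∘ t) =
      MonoidAlgebra.domCongr ℤ ℤ (MulAut.conj π) (combYoungSym lam mu s t) := by
  rw [combYoungSym, combYoungSym, map_mul, domCongr_sumElt, domCongr_altElt,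
    combRowStab_comp, combColStab_comp]

end YS

namespace YS

variable {N : ℕ}

lemma combYoungSym_comm (lam mu : YoungDiagram) (s : ↥lam.cells → Fin N)
    (t : ↥mu.cells → Fin N) : combYoungSym lam mu s t = combYoungSym mu lam t s := by
  rw [combYoungSym, combYoungSym, combRowStab_comm, combColStab_comm]

lemma mem_entriesFinset (μ : YoungDiagram) (s : ↥μ.cells → Fin N) (c : ↥μ.cells) :
    s c ∈ entriesFinset μ s :=
  Finset.mem_image.2 ⟨c, Finset.mem_attach _ _, rfl⟩

lemma sumElim_bijective {lam mu : YoungDiagram} {n m : ℕ}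
    (hlam : lam.card = n) (hmu : mu.card = m)
    (s : ↥lam.cells → Fin (n + m)) (t : ↥mu.cells → Fin (n + m))
    (hs : Function.Injective s) (ht : Function.Injective t)
    (hd : Disjoint (entriesFinset lam s) (entriesFinset mu t)) :
    Function.Bijective (Sum.elim s t) := by
  rw [Fintype.bijective_iff_injective_and_card]
  constructor
  · rintro (a | a) (b | b) h <;> simp only [Sum.elim_inl, Sum.elim_inr] at h
    · rw [hs h]
    · exact absurd (mem_entriesFinset mu t b)
        (Finset.disjoint_left.1 hd (h ▸ mem_entriesFinset lam s a))
    · exact absurd (mem_entriesFinset lam s b)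
        (Finset.disjoint_right.1 hd (h ▸ mem_entriesFinset mu t a))
    · rw [ht h]
  · simp [YoungDiagram.card] at hlam hmu
    simp [hlam, hmu]

end YS

open YS Finset in
/-- `θ_{λ,μ} = θ_{μ,λ}`. -/
theorem coeffGcd_youngSym_product_symm (n m : ℕ) (lam mu : YoungDiagram)
    (hlam : lam.card = n) (hmu : mu.card = m)
    (s : ↥lam.cells → Fin (n + m)) (t : ↥mu.cells → Fin (n + m))
    (u : ↥mu.cells → Fin (n + m)) (v : ↥lam.cells → Fin (n + m))
    (hs : Function.Injective s) (ht : Function.Injective t)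
    (hu : Function.Injective u) (hv : Function.Injective v)
    (hsval : entriesFinset lam s = univ.filter (fun x : Fin (n + m) => (x : ℕ) < n))
    (htval : entriesFinset mu t = univ.filter (fun x : Fin (n + m) => n ≤ (x : ℕ)))
    (huval : entriesFinset mu u = univ.filter (fun x : Fin (n + m) => (x : ℕ) < m))
    (hvval : entriesFinset lam v = univ.filter (fun x : Fin (n + m) => m ≤ (x : ℕ))) :
    coeffGcd (youngSym lam s * youngSym mu t * combYoungSym lam mu s t) =
      coeffGcd (youngSym mu u * youngSym lam v * combYoungSym mu lam u v) := by
  have hdst : Disjoint (entriesFinset lam s) (entriesFinset mu t) := by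
    rw [hsval, htval, Finset.disjoint_left]
    intro a ha hb
    simp only [Finset.mem_filter, Finset.mem_univ, true_and] at ha hb
    omega
  have hduv : Disjoint (entriesFinset mu u) (entriesFinset lam v) := by
    rw [huval, hvval, Finset.disjoint_left]
    intro a ha hb
    simp only [Finset.mem_filter, Finset.mem_univ, true_and] at ha hb
    omega
  have hbst := sumElim_bijective hlam hmu s t hs ht hdst
  have hbvu : Function.Bijective (Sum.elim v u) := by
    rw [Fintype.bijective_iff_injective_and_card]
    constructor
    · rintro (a | a) (b | b) h <;> simp only [Sum.elim_inl, Sum.elim_inr] at h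
      · rw [hv h]
      · exact absurd (mem_entriesFinset mu u b)
          (Finset.disjoint_right.1 hduv (h ▸ mem_entriesFinset lam v a))
      · exact absurd (mem_entriesFinset lam v b)
          (Finset.disjoint_left.1 hduv (h ▸ mem_entriesFinset mu u a))
      · rw [hu h]
    · simp [YoungDiagram.card] at hlam hmu
      simp [hlam, hmu]
  let est : (↥lam.cells ⊕ ↥mu.cells) ≃ Fin (n + m) := Equiv.ofBijective _ hbst
  let evu : (↥lam.cells ⊕ ↥mu.cells) ≃ Fin (n + m) := Equiv.ofBijective _ hbvu
  let π : Perm (Fin (n + m)) := est.symm.trans evu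
  have hπs : ∀ c, π (s c) = v c := by
    intro c
    have h1 : est.symm (s c) = Sum.inl c := by
      rw [Equiv.symm_apply_eq]; rfl
    show evu (est.symm (s c)) = v c
    rw [h1]; rfl
  have hπt : ∀ c, π (t c) = u c := by
    intro c
    have h1 : est.symm (t c) = Sum.inr c := by
      rw [Equiv.symm_apply_eq]; rfl
    show evu (est.symm (t c)) = u c
    rw [h1]; rfl
  have hv' : v = ⇑π ∘ s := funext fun c => (hπs c).symm
  have hu' : u = ⇑π ∘ t := funext fun c => (hπt c).symm
  rw [hu', hv', domCongr_youngSym, domCongr_youngSym, domCongr_combYoungSym,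
    ← map_mul, ← map_mul, coeffGcd_domCongr, combYoungSym_comm mu lam t s,
    (commute_youngSym hdst).eq]
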